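/- Let f : X → Y be a map of topological spaces and suppose Y = ⊔_α S_α is a partition of Y into locally closed subsets satisfying the frontier condition (S_α ∩ closure(S_β) ≠ ∅ implies S_α ⊆ closure(S_β)). If f is continuous, open, and surjective, then the partition X = ⊔_α f⁻¹(S_α) also satisfies the frontier condition. -/
import Mathlib

/-- if `Y = ⊔ S_α` is a partition into locally closed sets satisfying the
frontier condition, and `f : X → Y` is a continuous open surjection, then the pullback
partition `X = ⊔ f⁻¹(S_α)` also satisfies the frontier condition. -/
theorem stmt12 {X Y : Type*} [TopologicalSpace X] [TopologicalSpace Y]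
    {ι : Type*} (S : ι → Set Y)
    (hlc : ∀ α, IsLocallyClosed (S α))
    (hdisj : Pairwise (Function.onFun Disjoint S))
    (hcover : ⋃ α, S α = Set.univ)
    (hfrontier : ∀ α β, (S α ∩ closure (S β)).Nonempty → S α ⊆ closure (S β))
    (f : X → Y) (hf : Continuous f) (hopen : IsOpenMap f) (hsurj : Function.Surjective f) :
    (⋃ α, f ⁻¹' S α = Set.univ) ∧
    Pairwise (Function.onFun Disjoint fun α => f ⁻¹' S α) ∧
    ∀ α β, (f ⁻¹' S α ∩ closure (f ⁻¹' S β)).Nonempty →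
      f ⁻¹' S α ⊆ closure (f ⁻¹' S β) := by
  have hkey : ∀ β, closure (f ⁻¹' S β) = f ⁻¹' closure (S β) := fun β =>
    (hopen.preimage_closure_eq_closure_preimage hf (S β)).symm
  refine ⟨?_, ?_, ?_⟩
  · rw [← Set.preimage_iUnion, hcover, Set.preimage_univ]
  · intro α β hab
    exact (hdisj hab).preimage f
  · intro α β ⟨x, hxα, hxβ⟩
    rw [hkey] at hxβ ⊢
    exact Set.preimage_mono (hfrontier α β ⟨f x, hxα, hxβ⟩)
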